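/- Let E be a finite-dimensional real inner product space, let g : E → ℝ be differentiable and strongly convex with constant μ > 0 (i.e., g(y) ≥ g(x) + ⟪∇g(x), y - x⟫ + μ‖y - x‖² for all x, y), let h : E → ℝ be convex and differentiable with ∇h Lipschitz continuous with constant L_h, and set f = g - h. Suppose f(x) ≥ f_low for all x ∈ E for some f_low ∈ ℝ. Let (x_k)_{k≥0} be DCA iterates, i.e., for every k, x_{k+1} is a global minimizer of x ↦ g(x) - ⟪∇h(x_k), x - x_k⟫. Then k · min_{0 ≤ i ≤ k} ‖∇f(x_i)‖² → 0 as k → ∞; in particular, for every ε > 0 there is an iterate x_k with ‖∇f(x_k)‖ ≤ ε, and the first such index is o(ε^{-2}). -/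

import Mathlib

open RealInnerProductSpace

section Aux

variable {E : Type*} [NormedAddCommGroup E] [InnerProductSpace ℝ E] [FiniteDimensional ℝ E]

/-- gradient inequality for differentiable convex functions -/
lemma aux_convex_grad_ineq {h : E → ℝ} (hh : Differentiable ℝ h)
    (hconv : ConvexOn ℝ Set.univ h) (x y : E) :
    h x + ⟪gradient h x, y - x⟫ ≤ h y := by
  set v := y - x with hv
  set φ : ℝ → ℝ := fun t => h (x + t • v) with hφ
  have hline : ∀ t : ℝ, HasDerivAt (fun s : ℝ => x + s • v) v t := by
    intro t
    simpa using ((hasDerivAt_id t).smul_const v).const_add x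
  have hder : ∀ t : ℝ, HasDerivAt φ ⟪gradient h (x + t • v), v⟫ t := by
    intro t
    have hgrad : HasFDerivAt h
        ((InnerProductSpace.toDual ℝ E) (gradient h (x + t • v))) (x + t • v) :=
      hasGradientAt_iff_hasFDerivAt.mp (hh (x + t • v)).hasGradientAt
    have := hgrad.comp_hasDerivAt t (hline t)
    simp only [InnerProductSpace.toDual_apply_apply] at this
    exact this
  have hφconv : ConvexOn ℝ Set.univ φ := by
    have h1 := hconv.comp_affineMap (AffineMap.lineMap x y : ℝ →ᵃ[ℝ] E)
    have h2 : (fun t : ℝ => h (x + t • v)) = h ∘ (AffineMap.lineMap x y : ℝ →ᵃ[ℝ] E) := by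
      funext t
      simp [Function.comp, AffineMap.lineMap_apply, hv, add_comm]
    simpa [hφ, h2] using h1
  have hslope := hφconv.deriv_le_slope (Set.mem_univ (0:ℝ)) (Set.mem_univ 1) one_pos
    (hder 0).differentiableAt
  have hd0 : deriv φ 0 = ⟪gradient h x, v⟫ := by
    have := (hder 0).deriv
    simpa using this
  have hφ1 : φ 1 = h y := by simp [hφ, hv]
  have hφ0 : φ 0 = h x := by simp [hφ]
  rw [hd0, slope_def_field, hφ1, hφ0] at hslope
  simp only [sub_zero, div_one] at hslope
  linarith

end Aux

/-- `o(1/k)` rate for the best iterate: `k * min_{0 ≤ i ≤ k} ‖∇f (x i)‖² → 0`;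
in particular, for every `ε > 0` some iterate has gradient norm at most `ε`. -/
theorem dca_best_grad_sq_little_o
    {E : Type*} [NormedAddCommGroup E] [InnerProductSpace ℝ E] [FiniteDimensional ℝ E]
    (g h : E → ℝ) (μ L : ℝ) (hμ : 0 < μ)
    (hg : Differentiable ℝ g)
    (hsc : ∀ x y : E, g y ≥ g x + ⟪gradient g x, y - x⟫ + μ * ‖y - x‖ ^ 2)
    (hh : Differentiable ℝ h) (hconv : ConvexOn ℝ Set.univ h)
    (hlip : ∀ x y : E, ‖gradient h x - gradient h y‖ ≤ L * ‖x - y‖)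
    (flow : ℝ) (hflow : ∀ x : E, g x - h x ≥ flow)
    (x : ℕ → E)
    (hmin : ∀ k : ℕ, ∀ y : E,
      g (x (k + 1)) - ⟪gradient h (x k), x (k + 1) - x k⟫ ≤
        g y - ⟪gradient h (x k), y - x k⟫) :
    Filter.Tendsto
      (fun k : ℕ => (k : ℝ) *
        (Finset.Icc 0 k).inf' (Finset.nonempty_Icc.2 (Nat.zero_le k))
          (fun i => ‖gradient (fun y => g y - h y) (x i)‖ ^ 2))
      Filter.atTop (nhds 0) ∧
    ∀ ε : ℝ, 0 < ε → ∃ k : ℕ, ‖gradient (fun y => g y - h y) (x k)‖ ≤ ε := by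
  classical
  set F : ℕ → ℝ := fun i => ‖gradient (fun y => g y - h y) (x i)‖ ^ 2 with hFdef
  have hFnonneg : ∀ i, 0 ≤ F i := fun i => by rw [hFdef]; positivity
  -- gradient of the difference
  have hgradf : ∀ z : E, gradient (fun y => g y - h y) z = gradient g z - gradient h z := by
    intro z
    show (InnerProductSpace.toDual ℝ E).symm (fderiv ℝ (fun y => g y - h y) z) = _
    rw [fderiv_fun_sub (hg z) (hh z), map_sub]
    rfl
  -- first-order optimality of the subproblem
  have hkey : ∀ k : ℕ, gradient g (x (k + 1)) = gradient h (x k) := by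
    intro k
    set c := gradient h (x k) with hc
    have hloc : IsLocalMin (fun y => g y - ⟪c, y - x k⟫) (x (k + 1)) :=
      Filter.Eventually.of_forall (fun y => hmin k y)
    have hzero := hloc.fderiv_eq_zero
    have h1 : HasFDerivAt (fun y : E => ⟪c, y - x k⟫) (innerSL ℝ c) (x (k + 1)) := by
      have heq : (fun y : E => ⟪c, y - x k⟫) = fun y : E => innerSL ℝ c y - ⟪c, x k⟫ := by
        funext y; simp [inner_sub_right]
      rw [heq]
      exact (innerSL ℝ c).hasFDerivAt.sub_const _
    have h2 : HasFDerivAt (fun y => g y - ⟪c, y - x k⟫)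
        (fderiv ℝ g (x (k + 1)) - innerSL ℝ c) (x (k + 1)) :=
      (hg (x (k + 1))).hasFDerivAt.sub h1
    have h3 : fderiv ℝ g (x (k + 1)) = innerSL ℝ c := by
      have h4 := h2.fderiv
      rw [hzero] at h4
      have h5 : fderiv ℝ g (x (k + 1)) - innerSL ℝ c = 0 := h4.symm
      rwa [sub_eq_zero] at h5
    have h6 : (InnerProductSpace.toDual ℝ E) c = innerSL ℝ c := by
      ext y; simp [InnerProductSpace.toDual_apply_apply]
    show (InnerProductSpace.toDual ℝ E).symm (fderiv ℝ g (x (k + 1))) = c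
    rw [h3, ← h6, LinearIsometryEquiv.symm_apply_apply]
  -- sufficient decrease
  have hC : ∀ k : ℕ, μ * ‖x (k + 1) - x k‖ ^ 2 ≤
      (g (x k) - h (x k)) - (g (x (k + 1)) - h (x (k + 1))) := by
    intro k
    have h1 := hsc (x (k + 1)) (x k)
    rw [hkey k] at h1
    have h2 := aux_convex_grad_ineq hh hconv (x k) (x (k + 1))
    have h3 : ⟪gradient h (x k), x k - x (k + 1)⟫ =
        -⟪gradient h (x k), x (k + 1) - x k⟫ := by
      rw [← inner_neg_right, neg_sub]
    have h4 : ‖x k - x (k + 1)‖ = ‖x (k + 1) - x k‖ := norm_sub_rev _ _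
    rw [h3, h4] at h1
    linarith
  -- gradient bound per step
  have hD : ∀ k : ℕ, F (k + 1) ≤
      L ^ 2 / μ * ((g (x k) - h (x k)) - (g (x (k + 1)) - h (x (k + 1)))) := by
    intro k
    have hg1 : gradient (fun y => g y - h y) (x (k + 1)) =
        gradient h (x k) - gradient h (x (k + 1)) := by
      rw [hgradf, hkey k]
    have h1 : ‖gradient (fun y => g y - h y) (x (k + 1))‖ ≤ L * ‖x k - x (k + 1)‖ := by
      rw [hg1]; exact hlip _ _
    have h1' : F (k + 1) ≤ L ^ 2 * ‖x (k + 1) - x k‖ ^ 2 := by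
      have := pow_le_pow_left₀ (norm_nonneg _) h1 2
      rw [hFdef]
      calc ‖gradient (fun y => g y - h y) (x (k + 1))‖ ^ 2
          ≤ (L * ‖x k - x (k + 1)‖) ^ 2 := this
        _ = L ^ 2 * ‖x (k + 1) - x k‖ ^ 2 := by rw [norm_sub_rev]; ring
    have h2 := hC k
    rw [div_mul_eq_mul_div, le_div_iff₀ hμ]
    calc F (k + 1) * μ ≤ (L ^ 2 * ‖x (k + 1) - x k‖ ^ 2) * μ :=
          mul_le_mul_of_nonneg_right h1' hμ.le
      _ = L ^ 2 * (μ * ‖x (k + 1) - x k‖ ^ 2) := by ring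
      _ ≤ L ^ 2 * ((g (x k) - h (x k)) - (g (x (k + 1)) - h (x (k + 1)))) :=
          mul_le_mul_of_nonneg_left h2 (sq_nonneg L)
  -- summability
  have hL2 : (0:ℝ) ≤ L ^ 2 / μ := div_nonneg (sq_nonneg L) hμ.le
  have hbound : ∀ n : ℕ, ∑ i ∈ Finset.range n, F (i + 1) ≤
      L ^ 2 / μ * ((g (x 0) - h (x 0)) - flow) := by
    intro n
    calc ∑ i ∈ Finset.range n, F (i + 1)
        ≤ ∑ i ∈ Finset.range n,
            L ^ 2 / μ * ((g (x i) - h (x i)) - (g (x (i + 1)) - h (x (i + 1)))) :=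
          Finset.sum_le_sum fun i _ => hD i
      _ = L ^ 2 / μ * ∑ i ∈ Finset.range n,
            ((g (x i) - h (x i)) - (g (x (i + 1)) - h (x (i + 1)))) :=
          (Finset.mul_sum _ _ _).symm
      _ = L ^ 2 / μ * ((g (x 0) - h (x 0)) - (g (x n) - h (x n))) := by
          rw [Finset.sum_range_sub' (fun i => g (x i) - h (x i))]
      _ ≤ L ^ 2 / μ * ((g (x 0) - h (x 0)) - flow) := by
          have := hflow (x n)
          exact mul_le_mul_of_nonneg_left (by linarith) hL2
  have hFs1 : Summable (fun i => F (i + 1)) :=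
    summable_of_sum_range_le (fun n => hFnonneg _) hbound
  have hFsum : Summable F := (summable_nat_add_iff 1).1 hFs1
  constructor
  · -- the o(1/k) statement
    apply squeeze_zero (g := fun n : ℕ => 2 * ∑' j : ℕ, F (j + (n / 2 + 1)))
    · intro n
      exact mul_nonneg (Nat.cast_nonneg n)
        (Finset.le_inf' _ _ fun i _ => hFnonneg i)
    · intro n
      rcases Nat.eq_zero_or_pos n with hn | hn
      · subst hn
        simp only [Nat.cast_zero, zero_mul]
        exact mul_nonneg (by norm_num) (tsum_nonneg fun j => hFnonneg _)
      · set m := n / 2 with hm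
        set M := (Finset.Icc 0 n).inf' (Finset.nonempty_Icc.2 (Nat.zero_le n)) F with hM
        have hmn : m < n := Nat.div_lt_self hn one_lt_two
        have hM0 : 0 ≤ M := Finset.le_inf' _ _ fun i _ => hFnonneg i
        have hMle : ∀ i ∈ Finset.Ioc m n, M ≤ F i := by
          intro i hi
          rw [Finset.mem_Ioc] at hi
          exact Finset.inf'_le _ (Finset.mem_Icc.2 ⟨Nat.zero_le _, hi.2⟩)
        have hsum1 : ((n - m : ℕ) : ℝ) * M ≤ ∑ i ∈ Finset.Ioc m n, F i := by
          have := Finset.card_nsmul_le_sum (Finset.Ioc m n) F M hMle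
          rwa [Nat.card_Ioc, nsmul_eq_mul] at this
        have hs : Summable (fun j => F (j + (m + 1))) := (summable_nat_add_iff (m + 1)).2 hFsum
        have hsum2 : ∑ i ∈ Finset.Ioc m n, F i ≤ ∑' j : ℕ, F (j + (m + 1)) := by
          have he : ∑ i ∈ Finset.Ioc m n, F i
              = ∑ j ∈ Finset.range (n - m), F (j + (m + 1)) := by
            rw [← Finset.Ico_add_one_add_one_eq_Ioc, Finset.sum_Ico_eq_sum_range]
            have hnm : n + 1 - (m + 1) = n - m := by omega
            rw [hnm]
            exact Finset.sum_congr rfl fun j _ => by rw [add_comm (m + 1) j]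
          rw [he]
          exact Summable.sum_le_tsum _ (fun i _ => hFnonneg _) hs
        have hn2 : (n : ℝ) ≤ 2 * ((n - m : ℕ) : ℝ) := by
          have : n ≤ 2 * (n - m) := by omega
          exact_mod_cast this
        calc (n : ℝ) * M ≤ (2 * ((n - m : ℕ) : ℝ)) * M := mul_le_mul_of_nonneg_right hn2 hM0
          _ = 2 * (((n - m : ℕ) : ℝ) * M) := by ring
          _ ≤ 2 * ∑ i ∈ Finset.Ioc m n, F i := by linarith
          _ ≤ 2 * ∑' j : ℕ, F (j + (m + 1)) := by linarith
    · have h1 : Filter.Tendsto (fun r : ℕ => ∑' j : ℕ, F (j + r))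
          Filter.atTop (nhds 0) := tendsto_sum_nat_add F
      have h2 : Filter.Tendsto (fun n : ℕ => n / 2 + 1) Filter.atTop Filter.atTop :=
        Filter.tendsto_atTop_atTop.2 fun b => ⟨2 * b, fun n hn => by omega⟩
      have h3 := (h1.comp h2).const_mul (2 : ℝ)
      simpa [Function.comp] using h3
  · -- existence of a small-gradient iterate
    intro ε hε
    have ht := hFsum.tendsto_atTop_zero
    have hev : ∀ᶠ k in Filter.atTop, F k < ε ^ 2 :=
      ht.eventually_lt_const (by positivity)
    obtain ⟨k, hk⟩ := hev.exists
    refine ⟨k, ?_⟩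
    have hk' : ‖gradient (fun y => g y - h y) (x k)‖ ^ 2 < ε ^ 2 := hk
    nlinarith [norm_nonneg (gradient (fun y => g y - h y) (x k))]
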